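/- If G is a bipartite graph with vertex classes V₀ and V₁, and there exists a matching I₀ covering every vertex of V₀ and a matching I₁ covering every vertex of V₁, then G admits a perfect matching. -/

import Mathlib

/-- **Cantor–Bernstein for bipartite graphs.** If `G` is bipartite with classes `V₀, V₁`,
a matching `I₀` covers `V₀` and a matching `I₁` covers `V₁`, then `G` has a perfect matching. -/
theorem cantor_bernstein_matching {V : Type*} (G : SimpleGraph V) (V₀ V₁ : Set V)
    (hpart : V₀ ∪ V₁ = Set.univ) (hdisj : Disjoint V₀ V₁)
    (hbip : ∀ ⦃u v⦄, G.Adj u v → (u ∈ V₀ ∧ v ∈ V₁) ∨ (u ∈ V₁ ∧ v ∈ V₀))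
    (I₀ : G.Subgraph) (hI₀ : I₀.IsMatching) (hI₀c : V₀ ⊆ I₀.verts)
    (I₁ : G.Subgraph) (hI₁ : I₁.IsMatching) (hI₁c : V₁ ⊆ I₁.verts) :
    ∃ M : G.Subgraph, M.IsPerfectMatching := by
  classical
  -- partner functions
  set f₀ : V → V := fun v => if h : v ∈ V₀ then (hI₀ (hI₀c h)).choose else v with hf₀def
  set f₁ : V → V := fun v => if h : v ∈ V₁ then (hI₁ (hI₁c h)).choose else v with hf₁def
  have hne01 : ∀ {v}, v ∈ V₀ → v ∉ V₁ := fun hv hv' => Set.disjoint_left.mp hdisj hv hv'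
  have hf₀ : ∀ {v}, v ∈ V₀ → I₀.Adj v (f₀ v) := by
    intro v hv
    simp only [hf₀def, dif_pos hv]
    exact (hI₀ (hI₀c hv)).choose_spec.1
  have hf₁ : ∀ {v}, v ∈ V₁ → I₁.Adj v (f₁ v) := by
    intro v hv
    simp only [hf₁def, dif_pos hv]
    exact (hI₁ (hI₁c hv)).choose_spec.1
  have hf₀V₁ : ∀ {v}, v ∈ V₀ → f₀ v ∈ V₁ := by
    intro v hv
    rcases hbip (I₀.adj_sub (hf₀ hv)) with ⟨_, h⟩ | ⟨h, _⟩
    · exact h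
    · exact absurd h (hne01 hv)
  have hf₁V₀ : ∀ {v}, v ∈ V₁ → f₁ v ∈ V₀ := by
    intro v hv
    rcases hbip (I₁.adj_sub (hf₁ hv)) with ⟨h, _⟩ | ⟨_, h⟩
    · exact absurd hv (hne01 h)
    · exact h
  have f₀inj : ∀ {u v}, u ∈ V₀ → v ∈ V₀ → f₀ u = f₀ v → u = v := by
    intro u v hu hv h
    have h1 : I₀.Adj (f₀ u) u := (hf₀ hu).symm
    have h2 : I₀.Adj (f₀ u) v := h ▸ (hf₀ hv).symm
    exact ((hI₀ (I₀.edge_vert h1)).unique h1 h2)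
  have f₁inj : ∀ {u v}, u ∈ V₁ → v ∈ V₁ → f₁ u = f₁ v → u = v := by
    intro u v hu hv h
    have h1 : I₁.Adj (f₁ u) u := (hf₁ hu).symm
    have h2 : I₁.Adj (f₁ u) v := h ▸ (hf₁ hv).symm
    exact ((hI₁ (I₁.edge_vert h1)).unique h1 h2)
  -- the Knaster–Tarski fixed point
  let F : Set V →o Set V := ⟨fun X => V₀ \ (f₁ '' (V₁ \ f₀ '' X)), by
    intro X Y hXY
    exact Set.diff_subset_diff_right
      (Set.image_mono (Set.diff_subset_diff_right (Set.image_mono hXY)))⟩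
  set A : Set V := OrderHom.lfp F with hAdef
  have hA : A = V₀ \ (f₁ '' (V₁ \ f₀ '' A)) := (F.map_lfp).symm
  set B : Set V := V₁ \ f₀ '' A with hBdef
  have hAV₀ : A ⊆ V₀ := by rw [hA]; exact Set.diff_subset
  have hBV₁ : B ⊆ V₁ := Set.diff_subset
  have hAnot : ∀ {v}, v ∈ A → v ∉ f₁ '' B := by
    intro v hv
    rw [hA] at hv
    exact hv.2
  have hcompl : ∀ {v}, v ∈ V₀ → v ∉ A → v ∈ f₁ '' B := by
    intro v hv hvA
    by_contra h
    exact hvA (hA ▸ ⟨hv, h⟩)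
  -- the matching relation
  let P : V → V → Prop := fun u v => (u ∈ A ∧ v = f₀ u) ∨ (u ∈ B ∧ v = f₁ u)
  have hPG : ∀ {u v}, P u v → G.Adj u v := by
    rintro u v (⟨hu, rfl⟩ | ⟨hu, rfl⟩)
    · exact I₀.adj_sub (hf₀ (hAV₀ hu))
    · exact I₁.adj_sub (hf₁ (hBV₁ hu))
  refine ⟨⟨Set.univ, fun u v => P u v ∨ P v u, ?_, @fun x _ _ => Set.mem_univ x,
      ⟨fun u v h => Or.symm h⟩⟩, ?_, fun v => Set.mem_univ v⟩
  · rintro u v (h | h)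
    · exact hPG h
    · exact (hPG h).symm
  -- the matching property
  intro v _
  have hv : v ∈ V₀ ∪ V₁ := hpart ▸ Set.mem_univ v
  -- uniqueness case analysis helper inline
  rcases hv with hv | hv
  · by_cases hvA : v ∈ A
    · refine ⟨f₀ v, Or.inl (Or.inl ⟨hvA, rfl⟩), ?_⟩
      rintro w ((⟨_, rfl⟩ | ⟨hvB, rfl⟩) | (⟨hwA, hw⟩ | ⟨hwB, hw⟩))
      · rfl
      · exact absurd (hBV₁ hvB) (hne01 hv)
      · exact absurd (hw ▸ hf₀V₁ (hAV₀ hwA)) (hne01 hv)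
      · exact absurd ⟨w, hwB, hw.symm⟩ (hAnot hvA)
    · obtain ⟨y, hyB, hyv⟩ := hcompl hv hvA
      refine ⟨y, Or.inr (Or.inr ⟨hyB, hyv.symm⟩), ?_⟩
      rintro w ((⟨hvA', _⟩ | ⟨hvB, _⟩) | (⟨hwA, hw⟩ | ⟨hwB, hw⟩))
      · exact absurd hvA' hvA
      · exact absurd (hBV₁ hvB) (hne01 hv)
      · exact absurd (hw ▸ hf₀V₁ (hAV₀ hwA)) (hne01 hv)
      · exact f₁inj (hBV₁ hwB) (hBV₁ hyB) (hw ▸ hyv.symm)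
  · by_cases hvB : v ∈ B
    · refine ⟨f₁ v, Or.inl (Or.inr ⟨hvB, rfl⟩), ?_⟩
      rintro w ((⟨hvA, _⟩ | ⟨_, rfl⟩) | (⟨hwA, hw⟩ | ⟨hwB, hw⟩))
      · exact absurd hv (hne01 (hAV₀ hvA))
      · rfl
      · exact absurd ⟨w, hwA, hw.symm⟩ hvB.2
      · exact absurd hv (hne01 (hw ▸ hf₁V₀ (hBV₁ hwB)))
    · have hvimg : v ∈ f₀ '' A := by
        by_contra h
        exact hvB ⟨hv, h⟩
      obtain ⟨x, hxA, hxv⟩ := hvimg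
      refine ⟨x, Or.inr (Or.inl ⟨hxA, hxv.symm⟩), ?_⟩
      rintro w ((⟨hvA, _⟩ | ⟨hvB', _⟩) | (⟨hwA, hw⟩ | ⟨hwB, hw⟩))
      · exact absurd hv (hne01 (hAV₀ hvA))
      · exact absurd hvB' hvB
      · exact f₀inj (hAV₀ hwA) (hAV₀ hxA) (hw ▸ hxv.symm)
      · exact absurd hv (hne01 (hw ▸ hf₁V₀ (hBV₁ hwB)))
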